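/- Let M ≥ 1, let h : ℤ² → M_M(ℂ) satisfy Σ_{(p,q)∈ℤ²} ‖h(p,q)‖_op < ∞ and h(−p,−q) = h(p,q)* for all (p,q). Let a₁, a₂ ∈ ℝ² be linearly independent, and let a₁*, a₂* ∈ ℝ² satisfy ⟨a_i*, a_j⟩ = 2π δ_{ij}. For κ ∈ ℝ², set 𝖧_κ := Σ_{(p,q)∈ℤ²} h(p,q) e^{−iκ·(p a₁ + q a₂)} (an M×M Hermitian matrix). Fix integers n, m ≥ 1 and k ∈ ℝ², and define the supercell Bloch matrix 𝖧̃_k, indexed by ({0,...,n−1} × {0,...,m−1}) × {1,...,M}, whose (row (i,j), column (i′,j′)) M×M block is Σ_{(p,q)∈ℤ²} h(np + i′ − i, mq + j′ − j) e^{−ik·(np a₁ + mq a₂)}. Then σ(𝖧̃_k) = ⋃_{r=0}^{n−1} ⋃_{s=0}^{m−1} σ(𝖧_{k + (r/n)a₁* + (s/m)a₂*}). -/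

import Mathlib

open scoped ComplexConjugate Matrix

noncomputable section

/-- The bounded operator on ℂ^M associated with an M×M complex matrix;
its norm is the operator norm of the matrix. -/
noncomputable def matCLM {M : ℕ} (A : Matrix (Fin M) (Fin M) ℂ) :
    EuclideanSpace ℂ (Fin M) →L[ℂ] EuclideanSpace ℂ (Fin M) :=
  Matrix.toEuclideanCLM (𝕜 := ℂ) A

lemma euclid_coord_le {M : ℕ} (v : EuclideanSpace ℂ (Fin M)) (a : Fin M) : ‖v a‖ ≤ ‖v‖ := by
  rw [EuclideanSpace.norm_eq]
  refine (Real.le_sqrt (norm_nonneg _) (Finset.sum_nonneg fun i _ => sq_nonneg _)).mpr ?_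
  refine Finset.single_le_sum (f := fun i => ‖v i‖ ^ 2) (fun i _ => sq_nonneg _) (Finset.mem_univ a)

lemma matCLM_entry_le {M : ℕ} (A : Matrix (Fin M) (Fin M) ℂ) (a b : Fin M) :
    ‖A a b‖ ≤ ‖matCLM A‖ := by
  set v : EuclideanSpace ℂ (Fin M) := (WithLp.equiv 2 (Fin M → ℂ)).symm (Pi.single b 1) with hv
  have h3 : (matCLM A v) a = A a b := by
    have := Matrix.toEuclideanCLM_toLp (𝕜 := ℂ) A (Pi.single b 1)
    rw [matCLM, hv, WithLp.equiv_symm_apply, this]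
    simp [Matrix.toLin'_apply, Matrix.mulVec_single]
  have hvnorm : ‖v‖ = 1 := by
    rw [hv, EuclideanSpace.norm_eq]
    rw [show (1:ℝ) = Real.sqrt 1 by simp]
    congr 1
    rw [Fintype.sum_eq_single b]
    · simp
    · intro x hx; simp [Pi.single_apply, hx]
  calc ‖A a b‖ = ‖(matCLM A v) a‖ := by rw [h3]
    _ ≤ ‖matCLM A v‖ := euclid_coord_le _ _
    _ ≤ ‖matCLM A‖ * ‖v‖ := (matCLM A).le_opNorm _
    _ = ‖matCLM A‖ := by rw [hvnorm, mul_one]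

lemma exp_orth (n : ℕ) (hn : 0 < n) (t : ℤ) :
    (∑ i : Fin n, Complex.exp (Complex.I * ((2 * Real.pi * ((t : ℝ) * (i : ℕ) / n) : ℝ) : ℂ))) =
      if (n : ℤ) ∣ t then (n : ℂ) else 0 := by
  have hn0 : (n : ℝ) ≠ 0 := Nat.cast_ne_zero.mpr hn.ne'
  have hn0c : (n : ℂ) ≠ 0 := Nat.cast_ne_zero.mpr hn.ne'
  set ζ : ℂ := Complex.exp (Complex.I * ((2 * Real.pi * ((t : ℝ) / n) : ℝ) : ℂ)) with hζ
  have hterm : ∀ i : Fin n,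
      Complex.exp (Complex.I * ((2 * Real.pi * ((t : ℝ) * (i : ℕ) / n) : ℝ) : ℂ)) = ζ ^ (i : ℕ) := by
    intro i
    rw [hζ, ← Complex.exp_nat_mul]
    congr 1
    push_cast
    field_simp
  rw [Finset.sum_congr rfl (fun i _ => hterm i), Fin.sum_univ_eq_sum_range (fun i => ζ ^ i)]
  have hζn : ζ ^ n = 1 := by
    rw [hζ, ← Complex.exp_nat_mul]
    rw [show (n : ℂ) * (Complex.I * ((2 * Real.pi * ((t : ℝ) / n) : ℝ) : ℂ)) = (t : ℂ) * (2 * Real.pi * Complex.I) by push_cast; field_simp]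
    exact Complex.exp_int_mul_two_pi_mul_I t
  by_cases hdvd : (n : ℤ) ∣ t
  · rw [if_pos hdvd]
    obtain ⟨c, hc⟩ := hdvd
    have hζ1 : ζ = 1 := by
      rw [hζ, show Complex.I * ((2 * Real.pi * ((t : ℝ) / n) : ℝ) : ℂ) = (c : ℂ) * (2 * Real.pi * Complex.I) by push_cast [hc]; field_simp]
      exact Complex.exp_int_mul_two_pi_mul_I c
    simp [hζ1]
  · have hζ1 : ζ ≠ 1 := by
      intro hone
      rw [hζ, Complex.exp_eq_one_iff] at hone
      obtain ⟨N, hN⟩ := hone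
      apply hdvd
      have hC : ((2 * Real.pi * ((t : ℝ) / n) : ℝ) : ℂ) = (N : ℂ) * (2 * Real.pi) := by
        have hI : Complex.I * ((2 * Real.pi * ((t : ℝ) / n) : ℝ) : ℂ) = Complex.I * ((N : ℂ) * (2 * Real.pi)) := by
          rw [hN]; ring
        exact mul_left_cancel₀ Complex.I_ne_zero hI
      have hre : (2 * Real.pi * ((t : ℝ) / n) : ℝ) = (N : ℝ) * (2 * Real.pi) := by
        exact_mod_cast hC
      have hpi : (2 * Real.pi) ≠ 0 := by positivity
      have ht : (t : ℝ) = (N : ℝ) * (n : ℝ) := by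
        apply mul_left_cancel₀ hpi
        field_simp [hn0] at hre
        linear_combination (2 * Real.pi) * hre
      have htz : t = N * n := by exact_mod_cast ht
      exact ⟨N, by rw [htz, mul_comm]⟩
    rw [geom_sum_eq hζ1, hζn]
    simp [hdvd]

lemma fin_dvd_iff (n : ℕ) (r r' : Fin n) : ((n : ℤ) ∣ (r : ℤ) - (r' : ℤ)) ↔ r = r' := by
  constructor
  · intro hdvd
    have hr := r.is_lt
    have hr' := r'.is_lt
    by_contra hne
    have hne' : ((r : ℤ) - (r' : ℤ)) ≠ 0 := by
      intro h0
      apply hne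
      have : (r : ℤ) = (r' : ℤ) := by omega
      exact Fin.ext (by exact_mod_cast this)
    have habs : (n : ℤ) ∣ |(r : ℤ) - (r' : ℤ)| := (dvd_abs _ _).mpr hdvd
    have hle : (n : ℤ) ≤ |(r : ℤ) - (r' : ℤ)| := Int.le_of_dvd (abs_pos.mpr hne') habs
    have : |(r : ℤ) - (r' : ℤ)| < n := by
      rw [abs_lt]; omega
    omega
  · rintro rfl; simp

lemma spectrum_blockDiagonal {o p : Type*} [Fintype o] [DecidableEq o] [Fintype p] [DecidableEq p]
    (B : o → Matrix p p ℂ) :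
    spectrum ℂ (Matrix.blockDiagonal B) = ⋃ k, spectrum ℂ (B k) := by
  ext μ
  have hblock : algebraMap ℂ (Matrix (p × o) (p × o) ℂ) μ - Matrix.blockDiagonal B
      = Matrix.blockDiagonal (fun k => algebraMap ℂ (Matrix p p ℂ) μ - B k) := by
    rw [show (fun k => (algebraMap ℂ (Matrix p p ℂ)) μ - B k) = (fun _ => algebraMap ℂ (Matrix p p ℂ) μ) - B from rfl, Matrix.blockDiagonal_sub]
    congr 1
    ext ⟨a, kk⟩ ⟨b, ll⟩
    by_cases hkl : kk = ll <;> by_cases hab : a = b <;>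
      simp [Matrix.algebraMap_eq_diagonal, Matrix.blockDiagonal_apply, Matrix.diagonal_apply,
        hkl, hab, Prod.ext_iff, Pi.algebraMap_apply]
  simp only [Set.mem_iUnion, spectrum.mem_iff, Matrix.isUnit_iff_isUnit_det, isUnit_iff_ne_zero,
    not_not, hblock, Matrix.det_blockDiagonal]
  rw [Finset.prod_eq_zero_iff]
  simp

def intShiftEquiv (n : ℕ) [NeZero n] (i : ℤ) : Fin n × ℤ ≃ ℤ :=
  (Equiv.prodComm (Fin n) ℤ).trans (((Int.divModEquiv n).symm).trans (Equiv.subRight i))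

lemma intShiftEquiv_apply (n : ℕ) [NeZero n] (i : ℤ) (x : Fin n × ℤ) :
    intShiftEquiv n i x = x.2 * n + (x.1 : ℤ) - i := rfl

/-- band folding for a supercell of a two-dimensional tight-binding
model. The spectrum of the supercell Bloch matrix 𝖧̃_k, built from the sublattice
(n a₁)ℤ ⊕ (m a₂)ℤ with coset representatives i a₁ + j a₂, equals the union of the
spectra of the original Bloch fibers 𝖧_{k + (r/n)a₁* + (s/m)a₂*}. -/
theorem statement14 (M n m : ℕ) (hM : 1 ≤ M) (hn : 1 ≤ n) (hm : 1 ≤ m)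
    (h : ℤ × ℤ → Matrix (Fin M) (Fin M) ℂ)
    (hsum : Summable fun pq : ℤ × ℤ => ‖matCLM (h pq)‖)
    (hsym : ∀ pq : ℤ × ℤ, h (-pq.1, -pq.2) = (h pq)ᴴ)
    (a₁ a₂ a₁s a₂s : EuclideanSpace ℝ (Fin 2))
    (hindep : LinearIndependent ℝ ![a₁, a₂])
    (h11 : (inner ℝ a₁s a₁ : ℝ) = 2 * Real.pi) (h12 : (inner ℝ a₁s a₂ : ℝ) = 0)
    (h21 : (inner ℝ a₂s a₁ : ℝ) = 0) (h22 : (inner ℝ a₂s a₂ : ℝ) = 2 * Real.pi)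
    (k : EuclideanSpace ℝ (Fin 2))
    (Hbulk : EuclideanSpace ℝ (Fin 2) → Matrix (Fin M) (Fin M) ℂ)
    (hHbulk : ∀ (κ : EuclideanSpace ℝ (Fin 2)) (r s : Fin M),
      Hbulk κ r s = ∑' pq : ℤ × ℤ,
        h pq r s *
          Complex.exp (-(Complex.I *
            ((inner ℝ κ ((pq.1 : ℝ) • a₁ + (pq.2 : ℝ) • a₂) : ℝ) : ℂ))))
    (Htilde : Matrix ((Fin n × Fin m) × Fin M) ((Fin n × Fin m) × Fin M) ℂ)
    (hHtilde : ∀ (i : Fin n) (j : Fin m) (r : Fin M) (i' : Fin n) (j' : Fin m) (s : Fin M),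
      Htilde ((i, j), r) ((i', j'), s) = ∑' pq : ℤ × ℤ,
        h ((n : ℤ) * pq.1 + ((i' : ℕ) : ℤ) - ((i : ℕ) : ℤ),
           (m : ℤ) * pq.2 + ((j' : ℕ) : ℤ) - ((j : ℕ) : ℤ)) r s *
          Complex.exp (-(Complex.I *
            ((inner ℝ k (((n : ℝ) * (pq.1 : ℝ)) • a₁ + ((m : ℝ) * (pq.2 : ℝ)) • a₂) : ℝ) : ℂ)))) :
    spectrum ℂ Htilde = ⋃ r : Fin n, ⋃ s : Fin m,
      spectrum ℂ
        (Hbulk (k + (((r : ℕ) : ℝ) / (n : ℝ)) • a₁s + (((s : ℕ) : ℝ) / (m : ℝ)) • a₂s)) := by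
  haveI : NeZero n := ⟨Nat.one_le_iff_ne_zero.mp hn⟩
  haveI : NeZero m := ⟨Nat.one_le_iff_ne_zero.mp hm⟩
  have hn0 : (n : ℝ) ≠ 0 := Nat.cast_ne_zero.mpr (Nat.one_le_iff_ne_zero.mp hn)
  have hm0 : (m : ℝ) ≠ 0 := Nat.cast_ne_zero.mpr (Nat.one_le_iff_ne_zero.mp hm)
  set κ : Fin n → Fin m → EuclideanSpace ℝ (Fin 2) := fun r s =>
    k + (((r : ℕ) : ℝ) / (n : ℝ)) • a₁s + (((s : ℕ) : ℝ) / (m : ℝ)) • a₂s with hκdef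
  -- inner product identity
  have hinner : ∀ (r : Fin n) (s : Fin m) (x y : ℝ),
      (inner ℝ (κ r s) (x • a₁ + y • a₂) : ℝ)
        = (inner ℝ k (x • a₁ + y • a₂) : ℝ)
          + 2 * Real.pi * (((r : ℕ) : ℝ) * x / n + ((s : ℕ) : ℝ) * y / m) := by
    intro r s x y
    simp only [hκdef, inner_add_left, real_inner_smul_left, inner_add_right,
      real_inner_smul_right, h11, h12, h21, h22]
    field_simp
    ring
  -- phases
  set Eph : Fin n → Fin m → ℝ → ℝ → ℂ := fun r s x y =>
    Complex.exp (-(Complex.I * ((inner ℝ (κ r s) (x • a₁ + y • a₂) : ℝ) : ℂ))) with hEdef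
  have hexp_norm : ∀ c : ℝ, ‖Complex.exp (-(Complex.I * (c : ℂ)))‖ = 1 := by
    intro c
    rw [Complex.norm_exp]
    simp
  have hsumentry : ∀ a b : Fin M, Summable (fun pq : ℤ × ℤ => ‖h pq a b‖) := fun a b =>
    Summable.of_nonneg_of_le (fun _ => norm_nonneg _) (fun pq => matCLM_entry_le _ a b) hsum
  -- the key computation
  have key : ∀ (i : Fin n) (j : Fin m) (a b : Fin M) (r : Fin n) (s : Fin m),
      (∑ w : Fin n × Fin m,
        Htilde ((i, j), a) (w, b) * Eph r s ((w.1 : ℕ) : ℝ) ((w.2 : ℕ) : ℝ))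
        = Eph r s ((i : ℕ) : ℝ) ((j : ℕ) : ℝ) * Hbulk (κ r s) a b := by
    intro i j a b r s
    set Efull : (Fin n × Fin m) × (ℤ × ℤ) ≃ ℤ × ℤ :=
      (Equiv.prodProdProdComm (Fin n) (Fin m) ℤ ℤ).trans
        ((intShiftEquiv n (i : ℤ)).prodCongr (intShiftEquiv m (j : ℤ))) with hEfull
    have hEfull_apply : ∀ (w : Fin n × Fin m) (pq : ℤ × ℤ),
        Efull (w, pq) = (pq.1 * n + (w.1 : ℤ) - (i : ℤ), pq.2 * m + (w.2 : ℤ) - (j : ℤ)) := by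
      intro w pq; rfl
    set F : ℤ × ℤ → ℂ := fun PQ => h PQ a b *
      Complex.exp (-(Complex.I *
        ((inner ℝ (κ r s) ((((PQ.1 : ℝ) + ((i : ℕ) : ℝ))) • a₁ +
          (((PQ.2 : ℝ) + ((j : ℕ) : ℝ))) • a₂) : ℝ) : ℂ))) with hFdef
    have hFsummable : Summable F := by
      apply Summable.of_norm_bounded hsum
      intro pq
      rw [hFdef]
      simp only [norm_mul]
      rw [hexp_norm, mul_one]
      exact matCLM_entry_le _ a b
    have hGsummable : Summable (F ∘ Efull) := (Equiv.summable_iff Efull).mpr hFsummable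
    -- RHS as a tsum
    have hRHS : Eph r s ((i : ℕ) : ℝ) ((j : ℕ) : ℝ) * Hbulk (κ r s) a b = ∑' PQ : ℤ × ℤ, F PQ := by
      rw [hHbulk, ← tsum_mul_left]
      congr 1
      funext PQ
      rw [hEdef, hFdef]
      simp only []
      rw [← mul_assoc, mul_comm (Complex.exp _) (h PQ a b), mul_assoc, ← Complex.exp_add]
      congr 2
      have hsplit : (inner ℝ (κ r s) (((PQ.1 : ℝ) + ((i : ℕ) : ℝ)) • a₁ +
          ((PQ.2 : ℝ) + ((j : ℕ) : ℝ)) • a₂) : ℝ)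
          = (inner ℝ (κ r s) (((i : ℕ) : ℝ) • a₁ + ((j : ℕ) : ℝ) • a₂) : ℝ)
            + (inner ℝ (κ r s) ((PQ.1 : ℝ) • a₁ + (PQ.2 : ℝ) • a₂) : ℝ) := by
        simp only [add_smul, inner_add_right]
        ring
      rw [hsplit]
      push_cast
      ring
    -- LHS as the same tsum
    have hterm : ∀ (w : Fin n × Fin m),
        (∑' pq : ℤ × ℤ, F (Efull (w, pq)))
          = Htilde ((i, j), a) (w, b) * Eph r s ((w.1 : ℕ) : ℝ) ((w.2 : ℕ) : ℝ) := by
      intro w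
      rw [show ((w : Fin n × Fin m), b) = ((w.1, w.2), b) by rw [Prod.mk.eta]]
      rw [hHtilde i j a w.1 w.2 b, ← tsum_mul_right]
      congr 1
      funext pq
      rw [hEfull_apply, hFdef]
      simp only []
      have harg : ((pq.1 * (n : ℤ) + (w.1 : ℤ) - (i : ℤ), pq.2 * (m : ℤ) + (w.2 : ℤ) - (j : ℤ)) : ℤ × ℤ)
          = ((n : ℤ) * pq.1 + ((w.1 : ℕ) : ℤ) - ((i : ℕ) : ℤ),
             (m : ℤ) * pq.2 + ((w.2 : ℕ) : ℤ) - ((j : ℕ) : ℤ)) := by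
        rw [Prod.mk.injEq]
        exact ⟨by ring, by ring⟩
      rw [mul_assoc]
      congr 1
      · rw [harg]
      -- exponential identity
      · rw [← Complex.exp_add]
        have hvec : ((((pq.1 * (n : ℤ) + (w.1 : ℤ) - (i : ℤ) : ℤ) : ℝ) + ((i : ℕ) : ℝ)))
            = (n : ℝ) * (pq.1 : ℝ) + ((w.1 : ℕ) : ℝ) := by push_cast; ring
        have hvec2 : ((((pq.2 * (m : ℤ) + (w.2 : ℤ) - (j : ℤ) : ℤ) : ℝ) + ((j : ℕ) : ℝ)))
            = (m : ℝ) * (pq.2 : ℝ) + ((w.2 : ℕ) : ℝ) := by push_cast; ring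
        rw [hvec, hvec2]
        have hsplit : (inner ℝ (κ r s) (((n : ℝ) * (pq.1 : ℝ) + ((w.1 : ℕ) : ℝ)) • a₁ +
            ((m : ℝ) * (pq.2 : ℝ) + ((w.2 : ℕ) : ℝ)) • a₂) : ℝ)
            = (inner ℝ (κ r s) (((n : ℝ) * (pq.1 : ℝ)) • a₁ + ((m : ℝ) * (pq.2 : ℝ)) • a₂) : ℝ)
              + (inner ℝ (κ r s) (((w.1 : ℕ) : ℝ) • a₁ + ((w.2 : ℕ) : ℝ) • a₂) : ℝ) := by
          simp only [add_smul, inner_add_right]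
          ring
        have hshift : (inner ℝ (κ r s) (((n : ℝ) * (pq.1 : ℝ)) • a₁ + ((m : ℝ) * (pq.2 : ℝ)) • a₂) : ℝ)
            = (inner ℝ k (((n : ℝ) * (pq.1 : ℝ)) • a₁ + ((m : ℝ) * (pq.2 : ℝ)) • a₂) : ℝ)
              + 2 * Real.pi * ((((r : ℕ) : ℤ) * pq.1 + ((s : ℕ) : ℤ) * pq.2 : ℤ) : ℝ) := by
          rw [hinner r s ((n : ℝ) * (pq.1 : ℝ)) ((m : ℝ) * (pq.2 : ℝ))]
          congr 1
          push_cast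
          field_simp
        rw [hsplit, hshift]
        set t : ℤ := ((r : ℕ) : ℤ) * pq.1 + ((s : ℕ) : ℤ) * pq.2 with htdef
        have hper : Complex.exp (-(Complex.I * ((2 * Real.pi * (t : ℝ) : ℝ) : ℂ))) = 1 := by
          rw [show -(Complex.I * ((2 * Real.pi * (t : ℝ) : ℝ) : ℂ)) = ((-t : ℤ) : ℂ) * (2 * Real.pi * Complex.I) by push_cast; ring]
          exact Complex.exp_int_mul_two_pi_mul_I (-t)
        calc Complex.exp (-(Complex.I * ((((inner ℝ k (((n : ℝ) * (pq.1 : ℝ)) • a₁ + ((m : ℝ) * (pq.2 : ℝ)) • a₂) : ℝ) + 2 * Real.pi * (t : ℝ)) + (inner ℝ (κ r s) (((w.1 : ℕ) : ℝ) • a₁ + ((w.2 : ℕ) : ℝ) • a₂) : ℝ) : ℝ) : ℂ)))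
            = Complex.exp ((-(Complex.I * ((inner ℝ k (((n : ℝ) * (pq.1 : ℝ)) • a₁ + ((m : ℝ) * (pq.2 : ℝ)) • a₂) : ℝ) : ℂ)) + -(Complex.I * ((inner ℝ (κ r s) (((w.1 : ℕ) : ℝ) • a₁ + ((w.2 : ℕ) : ℝ) • a₂) : ℝ) : ℂ))) + -(Complex.I * ((2 * Real.pi * (t : ℝ) : ℝ) : ℂ))) := by
              congr 1
              push_cast
              ring
          _ = Complex.exp (-(Complex.I * ((inner ℝ k (((n : ℝ) * (pq.1 : ℝ)) • a₁ + ((m : ℝ) * (pq.2 : ℝ)) • a₂) : ℝ) : ℂ)) + -(Complex.I * ((inner ℝ (κ r s) (((w.1 : ℕ) : ℝ) • a₁ + ((w.2 : ℕ) : ℝ) • a₂) : ℝ) : ℂ))) * Complex.exp (-(Complex.I * ((2 * Real.pi * (t : ℝ) : ℝ) : ℂ))) := by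
              rw [Complex.exp_add]
          _ = _ := by rw [hper, mul_one, Complex.exp_add]
    calc (∑ w : Fin n × Fin m, Htilde ((i, j), a) (w, b) * Eph r s ((w.1 : ℕ) : ℝ) ((w.2 : ℕ) : ℝ))
        = ∑ w : Fin n × Fin m, ∑' pq : ℤ × ℤ, F (Efull (w, pq)) := by
          refine Finset.sum_congr rfl (fun w _ => (hterm w).symm)
      _ = ∑' w : Fin n × Fin m, ∑' pq : ℤ × ℤ, F (Efull (w, pq)) := (tsum_fintype _).symm
      _ = ∑' x : (Fin n × Fin m) × (ℤ × ℤ), F (Efull x) := by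
          have hin : ∀ w : Fin n × Fin m, Summable (fun pq : ℤ × ℤ => F (Efull (w, pq))) :=
            fun w => hGsummable.comp_injective
              (fun pq pq' hpq => by simpa using congrArg Prod.snd hpq)
          exact (Summable.tsum_prod' hGsummable hin).symm
      _ = ∑' PQ : ℤ × ℤ, F PQ := Efull.tsum_eq F
      _ = Eph r s ((i : ℕ) : ℝ) ((j : ℕ) : ℝ) * Hbulk (κ r s) a b := hRHS.symm
  -- the Fourier matrix
  set V : Matrix ((Fin n × Fin m) × Fin M) ((Fin n × Fin m) × Fin M) ℂ := fun x y =>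
    if x.2 = y.2 then Eph y.1.1 y.1.2 ((x.1.1 : ℕ) : ℝ) ((x.1.2 : ℕ) : ℝ) else 0 with hVdef
  set B2 : Fin n × Fin m → Matrix (Fin M) (Fin M) ℂ := fun rs => Hbulk (κ rs.1 rs.2) with hB2def
  set D : Matrix ((Fin n × Fin m) × Fin M) ((Fin n × Fin m) × Fin M) ℂ :=
    Matrix.reindexAlgEquiv ℂ ℂ (Equiv.prodComm (Fin M) (Fin n × Fin m)) (Matrix.blockDiagonal B2)
    with hDdef
  have hDapp : ∀ x y, D x y = if x.1 = y.1 then Hbulk (κ x.1.1 x.1.2) x.2 y.2 else 0 := by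
    rintro ⟨rs, a⟩ ⟨rs', b⟩
    simp only [hDdef, Matrix.reindexAlgEquiv_apply, Matrix.reindex_apply, Matrix.submatrix_apply,
      Equiv.prodComm_symm, Equiv.prodComm_apply, Prod.swap_prod_mk, Matrix.blockDiagonal_apply,
      hB2def]
  have hHV : Htilde * V = V * D := by
    ext x y
    obtain ⟨⟨i, j⟩, a⟩ := x
    obtain ⟨⟨r, s⟩, b⟩ := y
    rw [Matrix.mul_apply, Matrix.mul_apply]
    have hL : ∀ w : Fin n × Fin m, (∑ c : Fin M, Htilde ((i, j), a) ((w, c)) * V ((w, c)) ((r, s), b))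
        = Htilde ((i, j), a) (w, b) * Eph r s ((w.1 : ℕ) : ℝ) ((w.2 : ℕ) : ℝ) := by
      intro w
      simp [hVdef, mul_ite, mul_zero, Finset.sum_ite_eq']
    have hR : ∀ w : Fin n × Fin m, (∑ c : Fin M, V ((i, j), a) ((w, c)) * D ((w, c)) ((r, s), b))
        = (if w = (r, s) then Eph w.1 w.2 ((i : ℕ) : ℝ) ((j : ℕ) : ℝ) * Hbulk (κ r s) a b else 0) := by
      intro w
      simp only [hVdef, hDapp]
      by_cases hw : w = (r, s)
      · subst hw
        simp [ite_mul, zero_mul, Finset.sum_ite_eq]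
      · simp [hw]
    have hLfull : (∑ z : (Fin n × Fin m) × Fin M, Htilde ((i, j), a) z * V z ((r, s), b))
        = ∑ w : Fin n × Fin m, Htilde ((i, j), a) (w, b) * Eph r s ((w.1 : ℕ) : ℝ) ((w.2 : ℕ) : ℝ) := by
      rw [Fintype.sum_prod_type]
      exact Finset.sum_congr rfl (fun w _ => hL w)
    have hRfull : (∑ z : (Fin n × Fin m) × Fin M, V ((i, j), a) z * D z ((r, s), b))
        = Eph r s ((i : ℕ) : ℝ) ((j : ℕ) : ℝ) * Hbulk (κ r s) a b := by
      rw [Fintype.sum_prod_type]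
      rw [Finset.sum_congr rfl (fun w _ => hR w)]
      rw [Finset.sum_ite_eq' Finset.univ ((r, s) : Fin n × Fin m)
        (fun w => Eph w.1 w.2 ((i : ℕ) : ℝ) ((j : ℕ) : ℝ) * Hbulk (κ r s) a b)]
      simp only [Finset.mem_univ, if_true]
    rw [hLfull, hRfull]
    exact key i j a b r s
  -- unitarity
  have hnm0 : ((n : ℂ) * (m : ℂ)) ≠ 0 :=
    mul_ne_zero (Nat.cast_ne_zero.mpr (Nat.one_le_iff_ne_zero.mp hn))
      (Nat.cast_ne_zero.mpr (Nat.one_le_iff_ne_zero.mp hm))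
  have hVV : Vᴴ * V = ((n : ℂ) * (m : ℂ)) • (1 : Matrix ((Fin n × Fin m) × Fin M) ((Fin n × Fin m) × Fin M) ℂ) := by
    ext x y
    obtain ⟨⟨r, s⟩, a⟩ := x
    obtain ⟨⟨r', s'⟩, b⟩ := y
    rw [Matrix.mul_apply]
    have hterm2 : ∀ (w : Fin n × Fin m), (∑ c : Fin M, (Vᴴ) ((r, s), a) (w, c) * V (w, c) ((r', s'), b))
        = if a = b then star (Eph r s ((w.1 : ℕ) : ℝ) ((w.2 : ℕ) : ℝ)) * Eph r' s' ((w.1 : ℕ) : ℝ) ((w.2 : ℕ) : ℝ) else 0 := by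
      intro w
      simp only [Matrix.conjTranspose_apply]; simp only [hVdef]
      by_cases hab : a = b
      · subst hab
        simp [ite_mul, zero_mul, apply_ite (star : ℂ → ℂ), Finset.sum_ite_eq]
      · rw [if_neg hab]
        refine Finset.sum_eq_zero (fun c _ => ?_)
        by_cases hca : c = a
        · rw [if_neg (fun hcb => hab (hca.symm.trans hcb)), mul_zero]
        · rw [if_neg hca, star_zero, zero_mul]
    set t₁ : ℤ := ((r : ℕ) : ℤ) - ((r' : ℕ) : ℤ) with ht₁
    set t₂ : ℤ := ((s : ℕ) : ℤ) - ((s' : ℕ) : ℤ) with ht₂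
    have hprod : ∀ (w1 : Fin n) (w2 : Fin m),
        star (Eph r s ((w1 : ℕ) : ℝ) ((w2 : ℕ) : ℝ)) * Eph r' s' ((w1 : ℕ) : ℝ) ((w2 : ℕ) : ℝ)
          = Complex.exp (Complex.I * ((2 * Real.pi * ((t₁ : ℝ) * ((w1 : ℕ) : ℝ) / n) : ℝ) : ℂ))
            * Complex.exp (Complex.I * ((2 * Real.pi * ((t₂ : ℝ) * ((w2 : ℕ) : ℝ) / m) : ℝ) : ℂ)) := by
      intro w1 w2
      simp only [hEdef, Complex.star_def]
      rw [← Complex.exp_conj, ← Complex.exp_add, ← Complex.exp_add]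
      congr 1
      rw [map_neg, map_mul, Complex.conj_I, Complex.conj_ofReal]
      rw [hinner r s ((w1 : ℕ) : ℝ) ((w2 : ℕ) : ℝ), hinner r' s' ((w1 : ℕ) : ℝ) ((w2 : ℕ) : ℝ)]
      push_cast [ht₁, ht₂]
      ring
    have hSfull : (∑ z : (Fin n × Fin m) × Fin M, (Vᴴ) ((r, s), a) z * V z ((r', s'), b))
        = ∑ w1 : Fin n, ∑ w2 : Fin m, (if a = b then
            star (Eph r s ((w1 : ℕ) : ℝ) ((w2 : ℕ) : ℝ)) * Eph r' s' ((w1 : ℕ) : ℝ) ((w2 : ℕ) : ℝ)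
            else 0) := by
      rw [Fintype.sum_prod_type, Fintype.sum_prod_type]
      exact Finset.sum_congr rfl fun w1 _ => Finset.sum_congr rfl fun w2 _ => hterm2 (w1, w2)
    rw [hSfull]
    by_cases hab : a = b
    swap
    · simp only [if_neg hab, Finset.sum_const, smul_zero]
      rw [Matrix.smul_apply, Matrix.one_apply, if_neg (by simp [Prod.ext_iff, hab])]
      simp
    simp only [if_pos hab]
    rw [Finset.sum_congr rfl (fun w1 _ => Finset.sum_congr rfl (fun w2 _ => hprod w1 w2))]
    rw [← Finset.sum_mul_sum]
    rw [exp_orth n (Nat.lt_of_lt_of_le Nat.zero_lt_one hn) t₁,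
      exp_orth m (Nat.lt_of_lt_of_le Nat.zero_lt_one hm) t₂]
    rw [ht₁, ht₂]
    rw [Matrix.smul_apply, Matrix.one_apply]
    by_cases hrr : r = r' <;> by_cases hss : s = s' <;>
      simp [hrr, hss, fin_dvd_iff, Prod.ext_iff, smul_eq_mul, hab]
  set W : Matrix ((Fin n × Fin m) × Fin M) ((Fin n × Fin m) × Fin M) ℂ :=
    (((n : ℂ) * (m : ℂ))⁻¹) • Vᴴ with hWdef
  have hWV : W * V = 1 := by
    rw [hWdef, Matrix.smul_mul, hVV, smul_smul, inv_mul_cancel₀ hnm0, one_smul]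
  have hVW : V * W = 1 := mul_eq_one_comm.mp hWV
  have hdecomp : Htilde = V * D * W := by
    calc Htilde = Htilde * (V * W) := by rw [hVW, mul_one]
      _ = (Htilde * V) * W := by rw [mul_assoc]
      _ = (V * D) * W := by rw [hHV]
  have hspec : spectrum ℂ Htilde = spectrum ℂ D := by
    rw [hdecomp]
    exact spectrum.units_conjugate (R := ℂ) (a := D) (u := ⟨V, W, hVW, hWV⟩)
  rw [hspec, hDdef, Matrix.reindexAlgEquiv_apply]
  rw [show Matrix.reindex (Equiv.prodComm (Fin M) (Fin n × Fin m)) (Equiv.prodComm (Fin M) (Fin n × Fin m)) (Matrix.blockDiagonal B2) = Matrix.reindexAlgEquiv ℂ ℂ (Equiv.prodComm (Fin M) (Fin n × Fin m)) (Matrix.blockDiagonal B2) from rfl]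
  rw [AlgEquiv.spectrum_eq, spectrum_blockDiagonal]
  ext μ
  simp only [Set.mem_iUnion, hB2def, Prod.exists, hκdef]
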